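/- Suppose S is an admissible pinnacle set of B_{2k+1} that is not admissible in D_{2k+1}, with positive part P = S ∩ ℕ and negative part N = S ∩ (-ℕ). Then P consists precisely of the smallest k - |N| elements of {1,...,2k+1} \ (-N). -/

import Mathlib

/-- The pinnacle set of a word `w : Fin n → ℤ`: values `w i` (for `0 < i < n-1`)
strictly larger than both neighbors. -/
def PinSet (n : ℕ) (w : Fin n → ℤ) : Set ℤ :=
  {x | ∃ (i : ℕ) (h0 : 0 < i) (h2 : i + 1 < n),
    w ⟨i, by omega⟩ = x ∧ w ⟨i - 1, by omega⟩ < w ⟨i, by omega⟩ ∧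
      w ⟨i + 1, h2⟩ < w ⟨i, by omega⟩}

/-- `w : Fin n → ℤ` is the one-line notation of a signed permutation of rank `n`:
the absolute values of its entries are distinct elements of `{1,...,n}`
(hence a bijection onto `{1,...,n}`). -/
def IsSignedPerm (n : ℕ) (w : Fin n → ℤ) : Prop :=
  (∀ i, 1 ≤ |w i| ∧ |w i| ≤ (n : ℤ)) ∧ Function.Injective fun i => |w i|

/-- `S` is an admissible pinnacle set of the hyperoctahedral group `B_n`. -/
def APSB (n : ℕ) (S : Finset ℤ) : Prop :=
  ∃ w : Fin n → ℤ, IsSignedPerm n w ∧ PinSet n w = ↑S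

/-- `S` is an admissible pinnacle set of the type `D` group `D_n`
(signed permutations with an even number of negative one-line entries). -/
def APSD (n : ℕ) (S : Finset ℤ) : Prop :=
  ∃ w : Fin n → ℤ, IsSignedPerm n w ∧
    Even (Finset.univ.filter fun i => w i < 0).card ∧ PinSet n w = ↑S

/-- `S` is an admissible pinnacle set of the symmetric group `S_n`
(an unsigned permutation is a signed permutation with all entries positive). -/
def APSA (n : ℕ) (S : Finset ℤ) : Prop :=
  ∃ w : Fin n → ℤ, IsSignedPerm n w ∧ (∀ i, 0 < w i) ∧ PinSet n w = ↑S

/-- `T` is an admissible pinnacle set of the totally ordered finite set `X ⊆ ℤ`: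
it is the pinnacle set of some arrangement of the elements of `X`. -/
def APSOn (X : Finset ℤ) (T : Finset ℤ) : Prop :=
  ∃ w : Fin X.card → ℤ, Function.Injective w ∧ (∀ i, w i ∈ X) ∧
    PinSet X.card w = ↑T

namespace Stmt13

/-- descending enumeration of a finset of integers -/
def descVal (F : Finset ℤ) (a : ℕ) : ℤ := ((F.sort (· ≤ ·)).reverse).getD a 0

lemma length_sort_rev (F : Finset ℤ) : ((F.sort (· ≤ ·)).reverse).length = F.card := by
  simp [Finset.length_sort]

lemma descVal_mem (F : Finset ℤ) {a : ℕ} (ha : a < F.card) : descVal F a ∈ F := by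
  have h : a < ((F.sort (· ≤ ·)).reverse).length := by rw [length_sort_rev]; exact ha
  have := List.getD_eq_get ((F.sort (· ≤ ·)).reverse) 0 ⟨a, h⟩
  rw [descVal, this]
  have : ((F.sort (· ≤ ·)).reverse).get ⟨a, h⟩ ∈ (F.sort (· ≤ ·)).reverse := List.get_mem _ _
  rw [List.mem_reverse, Finset.mem_sort] at this
  exact this

lemma descVal_strict (F : Finset ℤ) {a b : ℕ} (hab : a < b) (hb : b < F.card) :
    descVal F b < descVal F a := by
  have hsort : (F.sort (· ≤ ·)).SortedLT := Finset.sortedLT_sort F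
  have hb' : b < ((F.sort (· ≤ ·)).reverse).length := by rw [length_sort_rev]; exact hb
  have ha' : a < ((F.sort (· ≤ ·)).reverse).length := by rw [length_sort_rev]; omega
  rw [descVal, descVal, List.getD_eq_get _ 0 ⟨b, hb'⟩, List.getD_eq_get _ 0 ⟨a, ha'⟩]
  rw [List.get_reverse', List.get_reverse']
  · apply List.SortedLT.strictMono_get hsort
    simp only [Fin.mk_lt_mk]
    have := F.length_sort (α := ℤ) (· ≤ ·)
    simp at ha' hb' ⊢
    omega
  · simp only [List.length_reverse, Finset.length_sort] at ha' ⊢; omega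
  · simp only [List.length_reverse, Finset.length_sort] at hb' ⊢; omega

lemma descVal_surj (F : Finset ℤ) {x : ℤ} (hx : x ∈ F) :
    ∃ a, a < F.card ∧ descVal F a = x := by
  have : x ∈ (F.sort (· ≤ ·)).reverse := by rw [List.mem_reverse, Finset.mem_sort]; exact hx
  obtain ⟨⟨a, ha⟩, hget⟩ := List.mem_iff_get.mp this
  refine ⟨a, by simpa [length_sort_rev] using ha, ?_⟩
  rw [descVal, List.getD_eq_get _ 0 ⟨a, ha⟩, hget]

lemma descVal_gt (F : Finset ℤ) (x : ℤ) (c : ℕ)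
    (hc : c ≤ (F.filter (fun u => x < u)).card) {a : ℕ} (ha : a < c) (hac : a < F.card) :
    x < descVal F a := by
  by_contra hle
  push_neg at hle
  have hsub : F.filter (fun u => x < u) ⊆ (Finset.range a).image (descVal F) := by
    intro u hu
    rw [Finset.mem_filter] at hu
    obtain ⟨b, hb, rfl⟩ := descVal_surj F hu.1
    rcases lt_or_ge b a with h | h
    · exact Finset.mem_image.mpr ⟨b, Finset.mem_range.mpr h, rfl⟩
    · exfalso
      rcases eq_or_lt_of_le h with rfl | h'
      · exact absurd hu.2 (not_lt.mpr hle)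
      · have := descVal_strict F h' hb
        omega
  have := Finset.card_le_card hsub
  have h2 := Finset.card_image_le (s := Finset.range a) (f := descVal F)
  simp at h2
  omega

end Stmt13

namespace Stmt13

def buildV (n t : ℕ) (pin uval : ℕ → ℤ) (pos : Bool) : ℕ → ℤ := fun i =>
  if i < 2*t then (if i % 2 = 0 then -(uval (i/2)) else pin (i/2))
  else if pos = true ∧ i = n - 1 then uval (i - t) else -(uval (i - t))

lemma pinset_eq (n : ℕ) (v : ℕ → ℤ) (t : ℕ) (htn : 2*t < n)
    (h1 : ∀ j, j < t → v (2*j) < v (2*j+1))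
    (h2 : ∀ j, j < t → v (2*j+2) < v (2*j+1))
    (h3 : ∀ i, 2*t ≤ i → i+1 < n → v i < v (i+1)) :
    PinSet n (fun i : Fin n => v i) = {x | ∃ j, j < t ∧ v (2*j+1) = x} := by
  ext x
  simp only [PinSet, Set.mem_setOf_eq]
  constructor
  · rintro ⟨i, h0, hn, hval, hl, hr⟩
    by_cases hi : i < 2*t
    · rcases Nat.even_or_odd i with he | ho
      · exfalso
        obtain ⟨j, rfl⟩ := he
        have hj : 1 ≤ j := by omega
        have := h2 (j - 1) (by omega)
        have e1 : 2*(j-1)+2 = j + j := by omega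
        have e2 : 2*(j-1)+1 = j + j - 1 := by omega
        rw [e1, e2] at this
        exact absurd hl (by simpa using not_lt.mpr this.le)
      · obtain ⟨j, rfl⟩ := ho
        exact ⟨j, by omega, hval⟩
    · exfalso
      have := h3 i (by omega) hn
      exact absurd hr (by simpa using not_lt.mpr this.le)
  · rintro ⟨j, hj, rfl⟩
    refine ⟨2*j+1, by omega, by omega, rfl, ?_, ?_⟩
    · have e : 2*j+1-1 = 2*j := by omega
      show v (2*j+1-1) < v (2*j+1)
      rw [e]; exact h1 j hj
    · exact h2 j hj

end Stmt13

namespace Stmt13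

lemma buildV_pinset (n t : ℕ) (pin uval : ℕ → ℤ) (pos : Bool)
    (htn : 2*t < n)
    (hupos : ∀ a, a < n - t → 0 < uval a)
    (hdesc : ∀ a b, a < b → b < n - t → uval b < uval a)
    (hvp : ∀ j, j < t → -(uval j) < pin j)
    (hvp2 : ∀ j, j + 1 < t → -(uval (j+1)) < pin j)
    (htail0n : ∀ j, j + 1 = t → -(uval t) < pin j)
    (htail0p : pos = true → 2*t + 1 = n → ∀ j, j + 1 = t → uval t < pin j) :
    PinSet n (fun i : Fin n => buildV n t pin uval pos i) =
      {x | ∃ j, j < t ∧ pin j = x} := by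
  have hb : ∀ j, j < t → buildV n t pin uval pos (2*j+1) = pin j := by
    intro j hj
    have h1 : 2*j+1 < 2*t := by omega
    simp only [buildV, if_pos h1]
    have : (2*j+1) % 2 = 1 := by omega
    rw [if_neg (by omega)]
    congr 1
    omega
  rw [pinset_eq n _ t htn]
  · ext x
    simp only [Set.mem_setOf_eq]
    constructor
    · rintro ⟨j, hj, rfl⟩; exact ⟨j, hj, (hb j hj).symm⟩
    · rintro ⟨j, hj, rfl⟩; exact ⟨j, hj, hb j hj⟩
  · -- h1 : valley < pin
    intro j hj
    rw [hb j hj]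
    have h1 : 2*j < 2*t := by omega
    simp only [buildV, if_pos h1]
    rw [if_pos (by omega)]
    have : 2*j/2 = j := by omega
    rw [this]
    exact hvp j hj
  · -- h2 : next valley < pin
    intro j hj
    rw [hb j hj]
    by_cases h2 : 2*j+2 < 2*t
    · simp only [buildV, if_pos h2]
      rw [if_pos (by omega)]
      have : (2*j+2)/2 = j + 1 := by omega
      rw [this]
      exact hvp2 j (by omega)
    · -- 2*j+2 = 2*t, tail position
      have he : 2*j+2 = 2*t := by omega
      have hjt : j + 1 = t := by omega
      simp only [buildV, if_neg (by omega : ¬ (2*j+2 < 2*t))]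
      by_cases hp : pos = true ∧ 2*j+2 = n - 1
      · rw [if_pos hp]
        have : 2*j+2 - t = t := by omega
        rw [this]
        exact htail0p hp.1 (by omega) j hjt
      · rw [if_neg hp]
        have : 2*j+2 - t = t := by omega
        rw [this]
        exact htail0n j hjt
  · -- h3 : tail ascending
    intro i hi hi1
    have hni : ¬ i < 2*t := by omega
    have hni1 : ¬ i + 1 < 2*t := by omega
    simp only [buildV, if_neg hni, if_neg hni1]
    have hine : ¬ (pos = true ∧ i = n - 1) := by
      rintro ⟨-, h⟩; omega
    rw [if_neg hine]
    by_cases hp : pos = true ∧ i + 1 = n - 1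
    · rw [if_pos hp]
      have h1 : 0 < uval (i + 1 - t) := hupos _ (by omega)
      have h2 : 0 < uval (i - t) := hupos _ (by omega)
      omega
    · rw [if_neg hp]
      have := hdesc (i - t) (i + 1 - t) (by omega) (by omega)
      omega

lemma buildV_signed (n t : ℕ) (pin uval : ℕ → ℤ) (pos : Bool)
    (htn : 2*t < n)
    (hpin_abs : ∀ j, j < t → 1 ≤ |pin j| ∧ |pin j| ≤ (n:ℤ))
    (hpin_inj : ∀ j j', j < t → j' < t → |pin j| = |pin j'| → j = j')
    (hu_bnd : ∀ a, a < n - t → 1 ≤ uval a ∧ uval a ≤ (n:ℤ))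
    (hdesc : ∀ a b, a < b → b < n - t → uval b < uval a)
    (hdisj : ∀ j a, j < t → a < n - t → uval a ≠ |pin j|) :
    IsSignedPerm n (fun i : Fin n => buildV n t pin uval pos i) := by
  -- abs of entry description
  have habs : ∀ i : Fin n, (|buildV n t pin uval pos i| = uval (i / 2) ∧ (i:ℕ) % 2 = 0 ∧ (i:ℕ) < 2*t)
      ∨ (|buildV n t pin uval pos i| = |pin ((i:ℕ)/2)| ∧ (i:ℕ) % 2 = 1 ∧ (i:ℕ) < 2*t)
      ∨ (|buildV n t pin uval pos i| = uval ((i:ℕ) - t) ∧ 2*t ≤ (i:ℕ)) := by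
    intro i
    by_cases hi : (i:ℕ) < 2*t
    · by_cases he : (i:ℕ) % 2 = 0
      · left
        refine ⟨?_, he, hi⟩
        simp only [buildV, if_pos hi, if_pos he]
        rw [abs_neg, abs_of_pos]
        have := hu_bnd ((i:ℕ)/2) (by omega)
        omega
      · right; left
        refine ⟨?_, by omega, hi⟩
        simp only [buildV, if_pos hi, if_neg he]
    · right; right
      refine ⟨?_, by omega⟩
      simp only [buildV, if_neg hi]
      have hb := hu_bnd ((i:ℕ) - t) (by omega)
      by_cases hp : pos = true ∧ (i:ℕ) = n - 1
      · rw [if_pos hp, abs_of_pos]; omega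
      · rw [if_neg hp, abs_neg, abs_of_pos]; omega
  have huinj : ∀ a b, a < n - t → b < n - t → uval a = uval b → a = b := by
    intro a b ha hb h
    rcases lt_trichotomy a b with h' | h' | h'
    · have := hdesc a b h' hb; omega
    · exact h'
    · have := hdesc b a h' ha; omega
  constructor
  · intro i
    rcases habs i with ⟨h, -, hi⟩ | ⟨h, -, hi⟩ | ⟨h, hi⟩
    · rw [h]; exact hu_bnd _ (by omega)
    · rw [h]; exact hpin_abs _ (by omega)
    · rw [h]; exact hu_bnd _ (by have := i.2; omega)
  · intro i i' hii
    simp only at hii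
    have hi2 := i.2
    have hi'2 := i'.2
    rcases habs i with ⟨h, he, hi⟩ | ⟨h, he, hi⟩ | ⟨h, hi⟩ <;>
      rcases habs i' with ⟨h', he', hi'⟩ | ⟨h', he', hi'⟩ | ⟨h', hi'⟩ <;>
      rw [h, h'] at hii
    · have := huinj _ _ (by omega) (by omega) hii
      exact Fin.ext (by omega)
    · exact absurd hii (hdisj _ _ (by omega) (by omega))
    · have := huinj _ _ (by omega) (by omega) hii
      exact Fin.ext (by omega)
    · exact absurd hii.symm (hdisj _ _ (by omega) (by omega))
    · have := hpin_inj _ _ (by omega) (by omega) hii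
      exact Fin.ext (by omega)
    · exact absurd hii.symm (hdisj _ _ (by omega) (by omega))
    · have := huinj _ _ (by omega) (by omega) hii
      exact Fin.ext (by omega)
    · exact absurd hii (hdisj _ _ (by omega) (by omega))
    · have := huinj _ _ (by omega) (by omega) hii
      exact Fin.ext (by omega)

end Stmt13

namespace Stmt13

lemma apsd_of_pair (n : ℕ) (S : Finset ℤ) (w₀ w₁ : Fin n → ℤ) (i₀ : Fin n)
    (hs₀ : IsSignedPerm n w₀) (hs₁ : IsSignedPerm n w₁)
    (hp₀ : PinSet n w₀ = ↑S) (hp₁ : PinSet n w₁ = ↑S)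
    (hagree : ∀ i, i ≠ i₀ → (w₀ i < 0 ↔ w₁ i < 0))
    (hd0 : w₀ i₀ < 0) (hd1 : ¬ w₁ i₀ < 0) : APSD n S := by
  set F₀ := Finset.univ.filter fun i => w₀ i < 0 with hF₀
  set F₁ := Finset.univ.filter fun i => w₁ i < 0 with hF₁
  have hins : F₀ = insert i₀ F₁ := by
    ext i
    simp only [hF₀, hF₁, Finset.mem_insert, Finset.mem_filter, Finset.mem_univ, true_and]
    by_cases h : i = i₀
    · subst h; simp [hd0]
    · rw [hagree i h]; tauto
  have hni : i₀ ∉ F₁ := by simp [hF₁, hd1]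
  have hcard : F₀.card = F₁.card + 1 := by rw [hins, Finset.card_insert_of_notMem hni]
  rcases Nat.even_or_odd F₁.card with he | ho
  · exact ⟨w₁, hs₁, he, hp₁⟩
  · refine ⟨w₀, hs₀, ?_, hp₀⟩
    rw [hcard]
    exact Nat.even_add_one.mpr (Nat.not_even_iff_odd.mpr ho)

end Stmt13

namespace Stmt13

def valF (n : ℕ) (w : Fin n → ℤ) : ℕ → ℤ := fun i => if h : i < n then w ⟨i, h⟩ else 0

lemma valF_eq (n : ℕ) (w : Fin n → ℤ) (i : ℕ) (h : i < n) : valF n w i = w ⟨i, h⟩ := dif_pos h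

lemma valF_bnd (n : ℕ) (w : Fin n → ℤ) (hw : IsSignedPerm n w) (i : ℕ) (h : i < n) :
    1 ≤ |valF n w i| ∧ |valF n w i| ≤ (n : ℤ) := by
  rw [valF_eq n w i h]; exact hw.1 _

lemma valF_inj (n : ℕ) (w : Fin n → ℤ) (hw : IsSignedPerm n w) (i i' : ℕ)
    (h : i < n) (h' : i' < n) (he : |valF n w i| = |valF n w i'|) : i = i' := by
  rw [valF_eq n w i h, valF_eq n w i' h'] at he
  have := hw.2 he
  exact congrArg Fin.val this

lemma exists_posfun (n : ℕ) (w : Fin n → ℤ) (S : Finset ℤ) (hpw : PinSet n w = ↑S) :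
    ∃ g : ℤ → ℕ, ∀ s ∈ S, 0 < g s ∧ g s + 1 < n ∧ valF n w (g s) = s ∧
      valF n w (g s - 1) < s ∧ valF n w (g s + 1) < s := by
  have h : ∀ s : ℤ, s ∈ S → ∃ i : ℕ, 0 < i ∧ i + 1 < n ∧ valF n w i = s ∧
      valF n w (i - 1) < s ∧ valF n w (i + 1) < s := by
    intro s hs
    have : s ∈ PinSet n w := hpw ▸ (by exact_mod_cast hs)
    obtain ⟨i, h0, h2, hval, hl, hr⟩ := this
    refine ⟨i, h0, h2, ?_, ?_, ?_⟩
    · rw [valF_eq n w i (by omega)]; exact hval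
    · rw [valF_eq n w (i-1) (by omega)]
      exact hval ▸ hl
    · rw [valF_eq n w (i+1) (by omega)]
      exact hval ▸ hr
  classical
  refine ⟨fun s => if hs : s ∈ S then (h s hs).choose else 0, ?_⟩
  intro s hs
  simp only [dif_pos hs]
  exact (h s hs).choose_spec

end Stmt13

namespace Stmt13

section Extract

variable (n : ℕ) (w : Fin n → ℤ) (S : Finset ℤ) (g : ℤ → ℕ)
variable (hw : IsSignedPerm n w)
variable (hg : ∀ s ∈ S, 0 < g s ∧ g s + 1 < n ∧ valF n w (g s) = s ∧
      valF n w (g s - 1) < s ∧ valF n w (g s + 1) < s)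

include hw hg

lemma g_inj : ∀ s ∈ S, ∀ s' ∈ S, g s = g s' → s = s' := by
  intro s hs s' hs' he
  have h1 := (hg s hs).2.2.1
  have h2 := (hg s' hs').2.2.1
  rw [he] at h1
  exact h1.symm.trans h2

lemma g_nonadj : ∀ s ∈ S, ∀ s' ∈ S, g s' = g s + 1 → False := by
  intro s hs s' hs' he
  obtain ⟨h0, h1, hv, hl, hr⟩ := hg s hs
  obtain ⟨h0', h1', hv', hl', hr'⟩ := hg s' hs'
  rw [he] at hl'
  simp only [Nat.add_sub_cancel] at hl'
  rw [hv] at hl'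
  rw [← he, hv'] at hr
  omega

lemma card_le_k (k : ℕ) (hn : n = 2 * k + 1) : S.card ≤ k := by
  classical
  have hinj : Set.InjOn (fun s => (g s - 1) / 2) ↑S := by
    intro s hs s' hs' he
    simp only at he
    obtain ⟨h0, h1, hv, -, -⟩ := hg s hs
    obtain ⟨h0', h1', hv', -, -⟩ := hg s' hs'
    have hne : g s = g s' ∨ g s' = g s + 1 ∨ g s = g s' + 1 := by omega
    rcases hne with h | h | h
    · exact g_inj n w S g hw hg s hs s' hs' h
    · exact absurd h (fun hh => g_nonadj n w S g hw hg s hs s' hs' hh)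
    · exact absurd h (fun hh => g_nonadj n w S g hw hg s' hs' s hs hh)
  have hmap : ∀ s ∈ S, (g s - 1) / 2 ∈ Finset.range k := by
    intro s hs
    obtain ⟨h0, h1, -, -, -⟩ := hg s hs
    rw [Finset.mem_range]
    omega
  calc S.card = (S.image (fun s => (g s - 1) / 2)).card :=
        (Finset.card_image_of_injOn hinj).symm
    _ ≤ (Finset.range k).card := Finset.card_le_card (by
        intro x hx
        obtain ⟨s, hs, rfl⟩ := Finset.mem_image.mp hx
        exact hmap s hs)
    _ = k := Finset.card_range k

end Extract

end Stmt13

namespace Stmt13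

section Extract2

variable (n : ℕ) (w : Fin n → ℤ) (S : Finset ℤ) (g : ℤ → ℕ) (U : Finset ℤ)
variable (hw : IsSignedPerm n w)
variable (hg : ∀ s ∈ S, 0 < g s ∧ g s + 1 < n ∧ valF n w (g s) = s ∧
      valF n w (g s - 1) < s ∧ valF n w (g s + 1) < s)
variable (hU : ∀ u : ℤ, u ∈ U ↔ (1 ≤ u ∧ u ≤ (n:ℤ) ∧ ∀ s ∈ S, u ≠ |s|))

include hw hg hU

lemma key_bound (q : ℤ) (hq : q ∈ S) (hqneg : q < 0) :
    (S.filter (fun s => s ≤ q)).card + 1 ≤ (U.filter (fun u => |q| < u)).card := by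
  classical
  set J := S.filter (fun s => s ≤ q) with hJ
  have hqJ : q ∈ J := Finset.mem_filter.mpr ⟨hq, le_refl q⟩
  have hJS : ∀ s ∈ J, s ∈ S := fun s hs => (Finset.mem_filter.mp hs).1
  set I := J.image g with hIdef
  have hIcard : I.card = J.card := Finset.card_image_of_injOn (by
    intro s hs s' hs' he
    exact g_inj n w S g hw hg s (hJS s hs) s' (hJS s' hs') he)
  have hI : ∀ i ∈ I, 0 < i ∧ i + 1 < n ∧ valF n w i ≤ q ∧
      valF n w (i - 1) < valF n w i ∧ valF n w (i + 1) < valF n w i := by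
    intro i hi
    obtain ⟨s, hs, rfl⟩ := Finset.mem_image.mp hi
    obtain ⟨h0, h1, hv, hl, hr⟩ := hg s (hJS s hs)
    rw [hv]
    exact ⟨h0, h1, (Finset.mem_filter.mp hs).2, hl, hr⟩
  have hIne : I.Nonempty := ⟨g q, Finset.mem_image.mpr ⟨q, hqJ, rfl⟩⟩
  set i₀ := I.min' hIne with hi₀
  have hi₀I : i₀ ∈ I := I.min'_mem hIne
  have hi₀pos : 0 < i₀ := (hI i₀ hi₀I).1
  set R := insert (i₀ - 1) (I.image (· + 1)) with hR
  have hnotmem : i₀ - 1 ∉ I.image (· + 1) := by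
    intro hmem
    obtain ⟨i, hi, he⟩ := Finset.mem_image.mp hmem
    have := I.min'_le i hi
    omega
  have hRcard : R.card = J.card + 1 := by
    rw [hR, Finset.card_insert_of_notMem hnotmem,
      Finset.card_image_of_injective _ (add_left_injective 1),
      hIcard]
  -- every element of R has position < n, value < q, and is not a pinnacle position
  have hRprop : ∀ h ∈ R, h < n ∧ valF n w h < q ∧
      ((valF n w (h - 1) < valF n w h ∧ valF n w (h + 1) < valF n w h) → False) := by
    intro h hh
    rcases Finset.mem_insert.mp hh with rfl | hmem
    · obtain ⟨h0, h1, hvq, hl, hr⟩ := hI i₀ hi₀I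
      refine ⟨by omega, lt_of_lt_of_le hl hvq, ?_⟩
      rintro ⟨-, hco⟩
      have : i₀ - 1 + 1 = i₀ := by omega
      rw [this] at hco
      omega
    · obtain ⟨i, hi, rfl⟩ := Finset.mem_image.mp hmem
      obtain ⟨h0, h1, hvq, hl, hr⟩ := hI i hi
      refine ⟨by omega, lt_of_lt_of_le hr hvq, ?_⟩
      rintro ⟨hco, -⟩
      have : i + 1 - 1 = i := by omega
      rw [this] at hco
      omega
  have hRsub : R.image (fun h => |valF n w h|) ⊆ U.filter (fun u => |q| < u) := by
    intro u hu
    obtain ⟨h, hh, rfl⟩ := Finset.mem_image.mp hu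
    obtain ⟨hhn, hhq, hnp⟩ := hRprop h hh
    have hb := valF_bnd n w hw h hhn
    rw [Finset.mem_filter]
    constructor
    · rw [hU]
      refine ⟨hb.1, hb.2, ?_⟩
      intro s hs he
      obtain ⟨h0, h1, hv, hl, hr⟩ := hg s hs
      have : h = g s := by
        apply valF_inj n w hw h (g s) hhn (by omega)
        rw [he, hv]
      subst this
      rw [hv] at *
      exact hnp ⟨hl, hr⟩
    · have : valF n w h < 0 := by omega
      rw [abs_of_neg this, abs_of_neg hqneg]
      omega
  have hRinj : Set.InjOn (fun h => |valF n w h|) ↑R := by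
    intro a ha b hb he
    exact valF_inj n w hw a b (hRprop a ha).1 (hRprop b hb).1 he
  calc J.card + 1 = R.card := hRcard.symm
    _ = (R.image (fun h => |valF n w h|)).card := (Finset.card_image_of_injOn hRinj).symm
    _ ≤ (U.filter (fun u => |q| < u)).card := Finset.card_le_card hRsub

end Extract2

end Stmt13

namespace Stmt13

def ascVal (F : Finset ℤ) (a : ℕ) : ℤ := (F.sort (· ≤ ·)).getD a 0

lemma ascVal_mem (F : Finset ℤ) {a : ℕ} (ha : a < F.card) : ascVal F a ∈ F := by
  have h : a < (F.sort (· ≤ ·)).length := by rw [Finset.length_sort]; exact ha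
  rw [ascVal, List.getD_eq_get _ 0 ⟨a, h⟩]
  have := List.get_mem (F.sort (· ≤ ·)) ⟨a, h⟩
  rwa [Finset.mem_sort] at this

lemma ascVal_strict (F : Finset ℤ) {a b : ℕ} (hab : a < b) (hb : b < F.card) :
    ascVal F a < ascVal F b := by
  have hsort : (F.sort (· ≤ ·)).SortedLT := Finset.sortedLT_sort F
  have hb' : b < (F.sort (· ≤ ·)).length := by rw [Finset.length_sort]; exact hb
  have ha' : a < (F.sort (· ≤ ·)).length := by omega
  rw [ascVal, ascVal, List.getD_eq_get _ 0 ⟨b, hb'⟩, List.getD_eq_get _ 0 ⟨a, ha'⟩]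
  exact List.SortedLT.strictMono_get hsort (by simpa using hab)

lemma ascVal_surj (F : Finset ℤ) {x : ℤ} (hx : x ∈ F) :
    ∃ a, a < F.card ∧ ascVal F a = x := by
  have : x ∈ F.sort (· ≤ ·) := by rw [Finset.mem_sort]; exact hx
  obtain ⟨⟨a, ha⟩, hget⟩ := List.mem_iff_get.mp this
  refine ⟨a, by simpa [Finset.length_sort] using ha, ?_⟩
  rw [ascVal, List.getD_eq_get _ 0 ⟨a, ha⟩, hget]

lemma ascVal_count (F : Finset ℤ) {a : ℕ} (ha : a < F.card) :
    a + 1 ≤ (F.filter (fun s => s ≤ ascVal F a)).card := by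
  classical
  have hsub : (Finset.range (a+1)).image (ascVal F) ⊆ F.filter (fun s => s ≤ ascVal F a) := by
    intro x hx
    obtain ⟨b, hb, rfl⟩ := Finset.mem_image.mp hx
    rw [Finset.mem_range] at hb
    refine Finset.mem_filter.mpr ⟨ascVal_mem F (by omega), ?_⟩
    rcases eq_or_lt_of_le (by omega : b ≤ a) with rfl | h
    · exact le_refl _
    · exact (ascVal_strict F h ha).le
  have hinj : Set.InjOn (ascVal F) ↑(Finset.range (a+1)) := by
    intro x hx y hy he
    simp only [Finset.coe_range, Set.mem_Iio] at hx hy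
    rcases lt_trichotomy x y with h | h | h
    · have := ascVal_strict F h (by omega); omega
    · exact h
    · have := ascVal_strict F h (by omega); omega
  calc a + 1 = ((Finset.range (a+1)).image (ascVal F)).card := by
        rw [Finset.card_image_of_injOn hinj, Finset.card_range]
    _ ≤ _ := Finset.card_le_card hsub

end Stmt13

theorem Stmt13.main (k n : ℕ) (hn : n = 2 * k + 1) (S : Finset ℤ) (w : Fin n → ℤ)
    (hw : IsSignedPerm n w) (hpw : PinSet n w = ↑S) (h2 : ¬ APSD n S) :
    (S.filter fun x => 0 < x) ⊆
      (Finset.Icc 1 (2 * (k : ℤ) + 1)) \ ((S.filter fun x => x < 0).image Neg.neg) ∧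
    (S.filter fun x => 0 < x).card = k - (S.filter fun x => x < 0).card ∧
    ∀ p ∈ S.filter fun x => 0 < x,
      ∀ q ∈ ((Finset.Icc 1 (2 * (k : ℤ) + 1)) \
          ((S.filter fun x => x < 0).image Neg.neg)) \ (S.filter fun x => 0 < x),
        p < q := by
  classical
  have hncast : (n : ℤ) = 2 * (k : ℤ) + 1 := by rw [hn]; push_cast; ring
  obtain ⟨g, hg⟩ := Stmt13.exists_posfun n w S hpw
  have hSbnd : ∀ s ∈ S, 1 ≤ |s| ∧ |s| ≤ (n:ℤ) := by
    intro s hs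
    obtain ⟨h0, h1', hv, -, -⟩ := hg s hs
    rw [← hv]
    exact Stmt13.valF_bnd n w hw _ (by omega)
  have hSne : ∀ s ∈ S, s ≠ 0 := by
    intro s hs h
    have := hSbnd s hs
    rw [h] at this
    simp at this
  have habsinj : ∀ s ∈ S, ∀ s' ∈ S, |s| = |s'| → s = s' := by
    intro s hs s' hs' he
    obtain ⟨h0, hb1, hv, -, -⟩ := hg s hs
    obtain ⟨h0', hb1', hv', -, -⟩ := hg s' hs'
    have := Stmt13.valF_inj n w hw (g s) (g s') (by omega) (by omega)
      (by rw [hv, hv']; exact he)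
    rw [← hv, ← hv', this]
  set A := S.image abs with hA
  have hAcard : A.card = S.card :=
    Finset.card_image_of_injOn (fun s hs s' hs' he => habsinj s hs s' hs' he)
  set U := (Finset.Icc (1:ℤ) (n:ℤ)) \ A with hUdef
  have hU : ∀ u : ℤ, u ∈ U ↔ (1 ≤ u ∧ u ≤ (n:ℤ) ∧ ∀ s ∈ S, u ≠ |s|) := by
    intro u
    rw [hUdef, Finset.mem_sdiff, Finset.mem_Icc]
    constructor
    · rintro ⟨⟨hu1, hu2⟩, hni⟩
      refine ⟨hu1, hu2, fun s hs he => hni ?_⟩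
      rw [hA]
      exact Finset.mem_image.mpr ⟨s, hs, he.symm⟩
    · rintro ⟨hu1, hu2, hns⟩
      refine ⟨⟨hu1, hu2⟩, fun hcon => ?_⟩
      rw [hA] at hcon
      obtain ⟨s, hs, he⟩ := Finset.mem_image.mp hcon
      exact hns s hs he.symm
  have hAsub : A ⊆ Finset.Icc (1:ℤ) (n:ℤ) := by
    intro x hx
    rw [hA] at hx
    obtain ⟨s, hs, rfl⟩ := Finset.mem_image.mp hx
    rw [Finset.mem_Icc]
    exact hSbnd s hs
  have hIcc_card : (Finset.Icc (1:ℤ) (n:ℤ)).card = n := by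
    rw [Int.card_Icc]
    simp
  have hUcard : U.card = n - S.card := by
    rw [hUdef, Finset.card_sdiff_of_subset hAsub, hIcc_card, hAcard]
  set t := S.card with ht
  have htk : t ≤ k := Stmt13.card_le_k n w S g hw hg k hn
  set pin := Stmt13.ascVal S with hpin
  have hpin_mem : ∀ j, j < t → pin j ∈ S := fun j hj => Stmt13.ascVal_mem S hj
  have hpin_strict : ∀ j j', j < j' → j' < t → pin j < pin j' :=
    fun j j' h h' => Stmt13.ascVal_strict S h h'
  have hpin_surj : ∀ s ∈ S, ∃ j, j < t ∧ pin j = s := fun s hs => Stmt13.ascVal_surj S hs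
  have hpin_ne : ∀ j, j < t → pin j ≠ 0 := fun j hj => hSne _ (hpin_mem j hj)
  have hkey : ∀ j, j < t → pin j < 0 → j + 2 ≤ (U.filter (fun u => |pin j| < u)).card := by
    intro j hj hneg
    have h1' := Stmt13.ascVal_count S hj
    rw [← hpin] at h1'
    have h2' := Stmt13.key_bound n w S g U hw hg hU (pin j) (hpin_mem j hj) hneg
    omega
  have hUgt : ∀ j, j < t → pin j < 0 → ∀ i, i ≤ j + 1 → |pin j| < Stmt13.descVal U i := by
    intro j hj hneg i hi
    have hc := hkey j hj hneg
    have hfle : (U.filter (fun u => |pin j| < u)).card ≤ U.card := Finset.card_filter_le _ _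
    exact Stmt13.descVal_gt U _ (j+2) hc (by omega) (by omega)
  have hsetS : {x : ℤ | ∃ j, j < t ∧ pin j = x} = ↑S := by
    ext x
    simp only [Set.mem_setOf_eq, Finset.mem_coe]
    constructor
    · rintro ⟨j, hj, rfl⟩
      exact hpin_mem j hj
    · intro hx
      exact hpin_surj x hx
  have hpin_abs : ∀ j, j < t → 1 ≤ |pin j| ∧ |pin j| ≤ (n:ℤ) :=
    fun j hj => hSbnd _ (hpin_mem j hj)
  have hpin_inj : ∀ j j', j < t → j' < t → |pin j| = |pin j'| → j = j' := by
    intro j j' hj hj' he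
    have heq := habsinj _ (hpin_mem j hj) _ (hpin_mem j' hj') he
    rcases lt_trichotomy j j' with h | h | h
    · have := hpin_strict j j' h hj'; omega
    · exact h
    · have := hpin_strict j' j h hj; omega
  -- t = k
  have htkk : t = k := by
    by_contra hne
    have htlt : t < k := by omega
    have hupos : ∀ a, a < n - t → 0 < Stmt13.descVal U a := by
      intro a ha
      have hm := Stmt13.descVal_mem U (a := a) (by omega)
      rw [hU] at hm
      omega
    have hdesc : ∀ a b, a < b → b < n - t → Stmt13.descVal U b < Stmt13.descVal U a :=
      fun a b h hb => Stmt13.descVal_strict U h (by omega)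
    have hvp : ∀ j, j < t → -(Stmt13.descVal U j) < pin j := by
      intro j hj
      rcases (hpin_ne j hj).lt_or_gt with hneg | hpos
      · have := hUgt j hj hneg j (by omega)
        rw [abs_of_neg hneg] at this
        omega
      · have := hupos j (by omega)
        omega
    have hvp2 : ∀ j, j + 1 < t → -(Stmt13.descVal U (j+1)) < pin j := by
      intro j hj
      rcases (hpin_ne j (by omega)).lt_or_gt with hneg | hpos
      · have := hUgt j (by omega) hneg (j+1) (by omega)
        rw [abs_of_neg hneg] at this
        omega
      · have := hupos (j+1) (by omega)
        omega
    have htail0n : ∀ j, j + 1 = t → -(Stmt13.descVal U t) < pin j := by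
      intro j hj
      rcases (hpin_ne j (by omega)).lt_or_gt with hneg | hpos
      · have := hUgt j (by omega) hneg t (by omega)
        rw [abs_of_neg hneg] at this
        omega
      · have := hupos t (by omega)
        omega
    have hdisj : ∀ j a, j < t → a < n - t → Stmt13.descVal U a ≠ |pin j| := by
      intro j a hj ha he
      have hm := Stmt13.descVal_mem U (a := a) (by omega)
      rw [hU] at hm
      exact hm.2.2 _ (hpin_mem j hj) he
    have hps0 := Stmt13.buildV_pinset n t pin (Stmt13.descVal U) false (by omega) hupos hdesc hvp hvp2
      htail0n (by intro h; exact absurd h (by simp))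
    have hps1 := Stmt13.buildV_pinset n t pin (Stmt13.descVal U) true (by omega) hupos hdesc hvp hvp2
      htail0n (by intro _ h _ _; exfalso; omega)
    have hsg0 := Stmt13.buildV_signed n t pin (Stmt13.descVal U) false (by omega) hpin_abs hpin_inj
      (fun a ha => ⟨hupos a ha, ((hU _).mp (Stmt13.descVal_mem U (by omega))).2.1⟩) hdesc hdisj
    have hsg1 := Stmt13.buildV_signed n t pin (Stmt13.descVal U) true (by omega) hpin_abs hpin_inj
      (fun a ha => ⟨hupos a ha, ((hU _).mp (Stmt13.descVal_mem U (by omega))).2.1⟩) hdesc hdisj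
    apply h2
    apply Stmt13.apsd_of_pair n S _ _ ⟨n-1, by omega⟩ hsg0 hsg1
      (by rw [hps0]; exact hsetS) (by rw [hps1]; exact hsetS)
    · intro i hi
      have hiv : (i : ℕ) ≠ n - 1 := by
        intro h
        exact hi (Fin.ext (by simp [h]))
      simp only [Stmt13.buildV]
      by_cases hlt : (i : ℕ) < 2*t
      · rw [if_pos hlt, if_pos hlt]
      · rw [if_neg hlt, if_neg hlt, if_neg (by simp), if_neg (by simp [hiv])]
    · show Stmt13.buildV n t pin (Stmt13.descVal U) false (n-1) < 0
      simp only [Stmt13.buildV]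
      rw [if_neg (by omega), if_neg (by simp)]
      have := hupos (n-1-t) (by omega)
      omega
    · show ¬ Stmt13.buildV n t pin (Stmt13.descVal U) true (n-1) < 0
      simp only [Stmt13.buildV]
      rw [if_neg (by omega), if_pos (by constructor <;> trivial)]
      have := hupos (n-1-t) (by omega)
      omega
  -- cardinality split
  have hsplit : (S.filter (fun x => 0 < x)).card + (S.filter (fun x => x < 0)).card = t := by
    have hc := Finset.card_filter_add_card_filter_not (s := S) (p := fun x => (0:ℤ) < x)
    have heq : S.filter (fun x => ¬ (0:ℤ) < x) = S.filter (fun x => x < 0) := by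
      apply Finset.filter_congr
      intro x hx
      have := hSne x hx
      constructor
      · intro h; omega
      · intro h; omega
    rw [heq] at hc
    rw [ht]
    omega
  refine ⟨?_, ?_, ?_⟩
  · -- goal 1
    intro p hp
    rw [Finset.mem_filter] at hp
    obtain ⟨hpS, hppos⟩ := hp
    rw [Finset.mem_sdiff]
    constructor
    · rw [Finset.mem_Icc, ← hncast]
      have := hSbnd p hpS
      rw [abs_of_pos hppos] at this
      exact this
    · intro hmem
      obtain ⟨s, hs, he⟩ := Finset.mem_image.mp hmem
      rw [Finset.mem_filter] at hs
      have hsS := hs.1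
      have habs : |s| = |p| := by
        rw [← he]
        simp [abs_neg]
      have heq2 := habsinj s hsS p hpS habs
      have he' : -s = p := he
      omega
  · -- goal 2
    omega
  · -- goal 3
    intro p hp q hq
    rw [Finset.mem_filter] at hp
    rw [Finset.mem_sdiff] at hq
    obtain ⟨hq1, hq2⟩ := hq
    rw [Finset.mem_sdiff] at hq1
    obtain ⟨hqI, hqN⟩ := hq1
    rw [Finset.mem_Icc, ← hncast] at hqI
    have hqU : q ∈ U := by
      rw [hU]
      refine ⟨hqI.1, hqI.2, ?_⟩
      intro s hs he
      rcases (hSne s hs).lt_or_gt with hneg | hpos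
      · apply hqN
        refine Finset.mem_image.mpr ⟨s, Finset.mem_filter.mpr ⟨hs, hneg⟩, ?_⟩
        rw [he, abs_of_neg hneg]
      · apply hq2
        rw [abs_of_pos hpos] at he
        rw [he]
        exact Finset.mem_filter.mpr ⟨hs, hpos⟩
    by_contra hnlt
    have hqp : q < p := by
      have hne : q ≠ p := by
        intro h
        exact ((hU q).mp hqU).2.2 p hp.1 (by rw [abs_of_pos hp.2]; exact h)
      omega
    -- second construction
    have hUne : U.Nonempty := ⟨q, hqU⟩
    set u₀ := U.min' hUne with hu₀
    have hu₀U : u₀ ∈ U := U.min'_mem hUne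
    have hu₀q : u₀ ≤ q := U.min'_le q hqU
    have hu₀pos : 0 < u₀ := by have := (hU u₀).mp hu₀U; omega
    set U' := U.erase u₀ with hU'def
    have hU'card : U'.card = n - t - 1 := by
      rw [hU'def, Finset.card_erase_of_mem hu₀U, hUcard, ht]
    have hU'sub : ∀ x ∈ U', x ∈ U := fun x hx => Finset.mem_of_mem_erase hx
    have hU'gt : ∀ x ∈ U', u₀ < x := by
      intro x hx
      have h1' := U.min'_le x (hU'sub x hx)
      have h2' := Finset.ne_of_mem_erase hx
      omega
    set uval := fun a => if a = n - t - 1 then u₀ else Stmt13.descVal U' a with huval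
    have hrpos : 0 < (S.filter (fun x => 0 < x)).card :=
      Finset.card_pos.mpr ⟨p, Finset.mem_filter.mpr hp⟩
    have hjm : ∀ j, j < t → pin j < 0 → j + 1 ≤ (S.filter (fun x => x < 0)).card := by
      intro j hj hneg
      have hsub : S.filter (fun s => s ≤ pin j) ⊆ S.filter (fun x => x < 0) := by
        intro x hx
        rw [Finset.mem_filter] at hx ⊢
        exact ⟨hx.1, by omega⟩
      have h1' := Stmt13.ascVal_count S hj
      rw [← hpin] at h1'
      have h2' := Finset.card_le_card hsub
      omega
    have hkey2 : ∀ j, j < t → pin j < 0 → j + 2 ≤ (U'.filter (fun u => |pin j| < u)).card := by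
      intro j hj hneg
      have hk1 := hkey j hj hneg
      by_cases hcase : |pin j| < u₀
      · have heq : U'.filter (fun u => |pin j| < u) = U' :=
          Finset.filter_true_of_mem (fun x hx => lt_trans hcase (hU'gt x hx))
        rw [heq, hU'card]
        have := hjm j hj hneg
        omega
      · have hnm : u₀ ∉ U.filter (fun u => |pin j| < u) := by
          rw [Finset.mem_filter]
          push_neg
          intro
          omega
        have hfe : U'.filter (fun u => |pin j| < u) = U.filter (fun u => |pin j| < u) := by
          rw [hU'def, Finset.filter_erase, Finset.erase_eq_of_notMem hnm]
        rw [hfe]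
        omega
    have hU'gtval : ∀ j, j < t → pin j < 0 → ∀ i, i ≤ j + 1 → |pin j| < Stmt13.descVal U' i := by
      intro j hj hneg i hi
      have hc := hkey2 j hj hneg
      have := hjm j hj hneg
      have hfle : (U'.filter (fun u => |pin j| < u)).card ≤ U'.card := Finset.card_filter_le _ _
      exact Stmt13.descVal_gt U' _ (j+2) hc (by omega) (by omega)
    have hupos2 : ∀ a, a < n - t → 0 < uval a := by
      intro a ha
      simp only [huval]
      by_cases h : a = n - t - 1
      · rw [if_pos h]; exact hu₀pos
      · simp only [if_neg h]
        have hm := Stmt13.descVal_mem U' (a := a) (by omega)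
        have := (hU _).mp (hU'sub _ hm)
        omega
    have hdesc2 : ∀ a b, a < b → b < n - t → uval b < uval a := by
      intro a b hab hb
      simp only [huval]
      by_cases hbb : b = n - t - 1
      · rw [if_pos hbb, if_neg (by omega : ¬ a = n - t - 1)]
        exact hU'gt _ (Stmt13.descVal_mem U' (by omega))
      · rw [if_neg hbb, if_neg (by omega : ¬ a = n - t - 1)]
        exact Stmt13.descVal_strict U' hab (by omega)
    have huval_eq : ∀ a, a < t → uval a = Stmt13.descVal U' a := by
      intro a ha
      simp only [huval]
      rw [if_neg (by omega : ¬ a = n - t - 1)]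
    have hvp : ∀ j, j < t → -(uval j) < pin j := by
      intro j hj
      rcases (hpin_ne j hj).lt_or_gt with hneg | hpos
      · rw [huval_eq j hj]
        have := hU'gtval j hj hneg j (by omega)
        rw [abs_of_neg hneg] at this
        omega
      · have := hupos2 j (by omega)
        omega
    have hvp2 : ∀ j, j + 1 < t → -(uval (j+1)) < pin j := by
      intro j hj
      rcases (hpin_ne j (by omega)).lt_or_gt with hneg | hpos
      · rw [huval_eq (j+1) hj]
        have := hU'gtval j (by omega) hneg (j+1) (by omega)
        rw [abs_of_neg hneg] at this
        omega
      · have := hupos2 (j+1) (by omega)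
        omega
    have hpmax : ∀ s ∈ S, s ≤ pin (t-1) := by
      intro s hs
      obtain ⟨j', hj', he⟩ := hpin_surj s hs
      rcases eq_or_lt_of_le (by omega : j' ≤ t - 1) with h | h
      · rw [← he, h]
      · rw [← he]
        exact (hpin_strict j' (t-1) h (by omega)).le
    have hppin : p ≤ pin (t-1) := hpmax p hp.1
    have htail0n : ∀ j, j + 1 = t → -(uval t) < pin j := by
      intro j hj
      have := hupos2 t (by omega)
      have : 0 < uval t := this
      have hj' : j = t - 1 := by omega
      rw [hj']
      omega
    have htail0p : true = true → 2*t + 1 = n → ∀ j, j + 1 = t → uval t < pin j := by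
      intro _ _ j hj
      have hj' : j = t - 1 := by omega
      have huv : uval t = u₀ := by
        simp only [huval]
        rw [if_pos (by omega)]
      rw [hj', huv]
      omega
    have hdisj : ∀ j a, j < t → a < n - t → uval a ≠ |pin j| := by
      intro j a hj ha he
      simp only [huval] at he
      by_cases h : a = n - t - 1
      · rw [if_pos h] at he
        exact ((hU u₀).mp hu₀U).2.2 _ (hpin_mem j hj) he
      · rw [if_neg h] at he
        have hm := Stmt13.descVal_mem U' (a := a) (by omega)
        exact ((hU _).mp (hU'sub _ hm)).2.2 _ (hpin_mem j hj) he
    have hubnd : ∀ a, a < n - t → 1 ≤ uval a ∧ uval a ≤ (n:ℤ) := by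
      intro a ha
      simp only [huval]
      by_cases h : a = n - t - 1
      · rw [if_pos h]
        have := (hU u₀).mp hu₀U
        omega
      · rw [if_neg h]
        have hm := Stmt13.descVal_mem U' (a := a) (by omega)
        have := (hU _).mp (hU'sub _ hm)
        omega
    have hps0 := Stmt13.buildV_pinset n t pin uval false (by omega) hupos2 hdesc2 hvp hvp2
      htail0n (by intro h; exact absurd h (by simp))
    have hps1 := Stmt13.buildV_pinset n t pin uval true (by omega) hupos2 hdesc2 hvp hvp2
      htail0n htail0p
    have hsg0 := Stmt13.buildV_signed n t pin uval false (by omega) hpin_abs hpin_inj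
      hubnd hdesc2 hdisj
    have hsg1 := Stmt13.buildV_signed n t pin uval true (by omega) hpin_abs hpin_inj
      hubnd hdesc2 hdisj
    apply h2
    apply Stmt13.apsd_of_pair n S _ _ ⟨n-1, by omega⟩ hsg0 hsg1
      (by rw [hps0]; exact hsetS) (by rw [hps1]; exact hsetS)
    · intro i hi
      have hiv : (i : ℕ) ≠ n - 1 := by
        intro h
        exact hi (Fin.ext (by simp [h]))
      simp only [Stmt13.buildV]
      by_cases hlt : (i : ℕ) < 2*t
      · rw [if_pos hlt, if_pos hlt]
      · rw [if_neg hlt, if_neg hlt, if_neg (by simp), if_neg (by simp [hiv])]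
    · show Stmt13.buildV n t pin uval false (n-1) < 0
      simp only [Stmt13.buildV]
      rw [if_neg (by omega), if_neg (by simp)]
      have := hupos2 (n-1-t) (by omega)
      omega
    · show ¬ Stmt13.buildV n t pin uval true (n-1) < 0
      simp only [Stmt13.buildV]
      rw [if_neg (by omega), if_pos (by constructor <;> trivial)]
      have := hupos2 (n-1-t) (by omega)
      omega


theorem stmt13 (k : ℕ) (S : Finset ℤ) (h1 : APSB (2 * k + 1) S)
    (h2 : ¬ APSD (2 * k + 1) S) :
    (S.filter fun x => 0 < x) ⊆
      (Finset.Icc 1 (2 * (k : ℤ) + 1)) \ ((S.filter fun x => x < 0).image Neg.neg) ∧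
    (S.filter fun x => 0 < x).card = k - (S.filter fun x => x < 0).card ∧
    ∀ p ∈ S.filter fun x => 0 < x,
      ∀ q ∈ ((Finset.Icc 1 (2 * (k : ℤ) + 1)) \
          ((S.filter fun x => x < 0).image Neg.neg)) \ (S.filter fun x => 0 < x),
        p < q := by
  obtain ⟨w, hw, hpw⟩ := h1
  exact Stmt13.main k (2 * k + 1) rfl S w hw hpw h2
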